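/- Let (A, B, ⟨·,·⟩) be a non-degenerate pairing of finite Hopf C*-algebras and *_D the involution on the quantum double D(A,B). Then *_D is involutive: for all a ∈ A and b ∈ B, ((a,b)*)* = (a,b). -/

import Mathlib

noncomputable section
open scoped TensorProduct
open TensorProduct LinearMap

namespace QD

/-! ### Componentwise star on tensor products of star modules over `ℂ` -/

section StarTensor

variable (A B : Type*) [AddCommGroup A] [AddCommGroup B] [Module ℂ A] [Module ℂ B]
  [StarAddMonoid A] [StarAddMonoid B] [StarModule ℂ A] [StarModule ℂ B]

/-- The componentwise star on a tensor product of star modules over `ℂ`. -/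
def starAddHom : A ⊗[ℂ] B →+ A ⊗[ℂ] B :=
  TensorProduct.liftAddHom
    { toFun := fun a =>
        { toFun := fun b => star a ⊗ₜ[ℂ] star b
          map_zero' := by simp
          map_add' := fun b₁ b₂ => by simp [star_add, TensorProduct.tmul_add] }
      map_zero' := by ext b; simp
      map_add' := fun a₁ a₂ => by ext b; simp [star_add, TensorProduct.add_tmul] }
    fun c a b => by simp [star_smul, TensorProduct.smul_tmul]

instance : StarAddMonoid (A ⊗[ℂ] B) where
  star x := starAddHom A B x
  star_involutive x := by
    show starAddHom A B (starAddHom A B x) = x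
    induction x using TensorProduct.induction_on with
    | zero => simp
    | tmul a b => simp [starAddHom]
    | add x y hx hy => rw [map_add, map_add, hx, hy]
  star_add x y := (starAddHom A B).map_add x y

variable {A B}

lemma star_def (x : A ⊗[ℂ] B) : star x = starAddHom A B x := rfl

@[simp] lemma star_tmul (a : A) (b : B) :
    star (a ⊗ₜ[ℂ] b) = (star a) ⊗ₜ[ℂ] (star b) := by
  simp [star_def, starAddHom]

variable (A B)

instance : StarModule ℂ (A ⊗[ℂ] B) where
  star_smul c x := by
    induction x using TensorProduct.induction_on with
    | zero => rw [smul_zero, star_def, map_zero, smul_zero]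
    | tmul a b => rw [TensorProduct.smul_tmul', star_tmul, star_tmul, star_smul,
        TensorProduct.smul_tmul']
    | add x y hx hy => rw [smul_add, @star_add _ _ TensorProduct.instStarAddMonoid,
        @star_add _ _ TensorProduct.instStarAddMonoid, hx, hy, smul_add]

end StarTensor

/-! ### Finite Hopf C*-algebras -/

/-- A finite Hopf C*-algebra structure on a finite-dimensional C*-algebra `A`:
a comultiplication, counit and antipode satisfying the Hopf algebra axioms,
such that the comultiplication and counit are *-homomorphisms and the antipode
satisfies `S(S(a)*)* = a` (and consequently `S² = id`). -/
structure FiniteHopfCStar (A : Type*) [NormedRing A] [StarRing A] [CStarRing A]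
    [NormedAlgebra ℂ A] [StarModule ℂ A] [FiniteDimensional ℂ A] where
  /-- The comultiplication. -/
  comul : A →ₗ[ℂ] A ⊗[ℂ] A
  /-- The counit. -/
  counit : A →ₗ[ℂ] ℂ
  /-- The antipode. -/
  antipode : A →ₗ[ℂ] A
  coassoc : ∀ a : A,
    (TensorProduct.assoc ℂ A A A) (LinearMap.rTensor A comul (comul a)) =
      LinearMap.lTensor A comul (comul a)
  counit_comul : ∀ a : A, (TensorProduct.lid ℂ A) (LinearMap.rTensor A counit (comul a)) = a
  comul_counit : ∀ a : A, (TensorProduct.rid ℂ A) (LinearMap.lTensor A counit (comul a)) = a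
  comul_one : comul 1 = 1
  comul_mul : ∀ a b : A, comul (a * b) = comul a * comul b
  counit_one : counit 1 = 1
  counit_mul : ∀ a b : A, counit (a * b) = counit a * counit b
  comul_star : ∀ a : A, comul (star a) = star (comul a)
  counit_star : ∀ a : A, counit (star a) = star (counit a)
  mul_antipode_rTensor_comul : ∀ a : A,
    LinearMap.mul' ℂ A (LinearMap.rTensor A antipode (comul a)) = counit a • 1
  mul_antipode_lTensor_comul : ∀ a : A,
    LinearMap.mul' ℂ A (LinearMap.lTensor A antipode (comul a)) = counit a • 1
  star_antipode_star_antipode : ∀ a : A, star (antipode (star (antipode a))) = a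
  antipode_antipode : ∀ a : A, antipode (antipode a) = a

/-! ### Pairings -/

section Pairing

variable {A B : Type*} [AddCommGroup A] [AddCommGroup B] [Module ℂ A] [Module ℂ B]

/-- The extension of a bilinear pairing `A × B → ℂ` to `(A ⊗ A) × (B ⊗ B) → ℂ`,
`⟨a₁ ⊗ a₂, b₁ ⊗ b₂⟩ = ⟨a₁, b₁⟩ ⟨a₂, b₂⟩`. -/
def pairT (p : A →ₗ[ℂ] B →ₗ[ℂ] ℂ) :
    A ⊗[ℂ] A →ₗ[ℂ] Module.Dual ℂ (B ⊗[ℂ] B) :=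
  TensorProduct.dualDistrib ℂ B B ∘ₗ TensorProduct.map p p

/-- Non-degeneracy of a bilinear pairing. -/
def Nondegenerate (p : A →ₗ[ℂ] B →ₗ[ℂ] ℂ) : Prop :=
  (∀ a : A, (∀ b : B, p a b = 0) → a = 0) ∧ (∀ b : B, (∀ a : A, p a b = 0) → b = 0)

end Pairing

section Main

variable {A B : Type*}
  [NormedRing A] [StarRing A] [CStarRing A] [NormedAlgebra ℂ A] [StarModule ℂ A]
  [FiniteDimensional ℂ A]
  [NormedRing B] [StarRing B] [CStarRing B] [NormedAlgebra ℂ B] [StarModule ℂ B]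
  [FiniteDimensional ℂ B]

variable (hA : FiniteHopfCStar A) (hB : FiniteHopfCStar B) (p : A →ₗ[ℂ] B →ₗ[ℂ] ℂ)

/-- A pairing of finite Hopf C*-algebras. -/
structure IsHopfPairing : Prop where
  pair_comul : ∀ (a : A) (b₁ b₂ : B), pairT p (hA.comul a) (b₁ ⊗ₜ[ℂ] b₂) = p a (b₁ * b₂)
  pair_mul : ∀ (a₁ a₂ : A) (b : B), pairT p.flip (hB.comul b) (a₁ ⊗ₜ[ℂ] a₂) = p (a₁ * a₂) b
  pair_star : ∀ (a : A) (b : B), p (star a) b = starRingEnd ℂ (p a (star (hB.antipode b)))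
  pair_one_right : ∀ a : A, p a 1 = hA.counit a
  pair_one_left : ∀ b : B, p 1 b = hB.counit b
  pair_antipode : ∀ (a : A) (b : B), p (hA.antipode a) b = p a (hB.antipode b)

/-- `a ▷ b = Σ b₍₁₎ ⟨a, b₍₂₎⟩`, the left action of `A` on `B`. -/
def lact (a : A) (b : B) : B :=
  TensorProduct.rid ℂ B ((LinearMap.lTensor B (p a)) (hB.comul b))

/-- `b ◁ a = Σ ⟨a, b₍₁₎⟩ b₍₂₎`, the right action of `A` on `B`. -/
def ract (b : B) (a : A) : B :=
  TensorProduct.lid ℂ B ((LinearMap.rTensor B (p a)) (hB.comul b))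

/-- `b ▷ a = Σ a₍₁₎ ⟨a₍₂₎, b⟩`, the left action of `B` on `A`. -/
def lact' (b : B) (a : A) : A :=
  TensorProduct.rid ℂ A ((LinearMap.lTensor A (p.flip b)) (hA.comul a))

/-- `a ◁ b = Σ ⟨a₍₁₎, b⟩ a₍₂₎`, the right action of `B` on `A`. -/
def ract' (a : A) (b : B) : A :=
  TensorProduct.lid ℂ A ((LinearMap.rTensor A (p.flip b)) (hA.comul a))

end Main

end QD

namespace QD

section Triples

variable {X : Type*} [NormedRing X] [StarRing X] [CStarRing X] [NormedAlgebra ℂ X]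
  [StarModule ℂ X] [FiniteDimensional ℂ X]

/-- The iterated comultiplication `x ↦ Σ x₍₁₎ ⊗ (x₍₂₎ ⊗ x₍₃₎)`. -/
def comul3 (h : FiniteHopfCStar X) : X →ₗ[ℂ] X ⊗[ℂ] (X ⊗[ℂ] X) :=
  LinearMap.lTensor X h.comul ∘ₗ h.comul

end Triples

section Rot

variable (X : Type*) [AddCommGroup X] [Module ℂ X]

/-- The rearrangement `x₁ ⊗ (x₂ ⊗ x₃) ↦ (x₃ ⊗ x₁) ⊗ x₂`. -/
def rot31 : X ⊗[ℂ] (X ⊗[ℂ] X) →ₗ[ℂ] (X ⊗[ℂ] X) ⊗[ℂ] X :=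
  (TensorProduct.comm ℂ X (X ⊗[ℂ] X)).toLinearMap
    ∘ₗ (TensorProduct.assoc ℂ X X X).toLinearMap
    ∘ₗ (TensorProduct.comm ℂ X (X ⊗[ℂ] X)).toLinearMap

/-- The rearrangement `x₁ ⊗ (x₂ ⊗ x₃) ↦ (x₁ ⊗ x₃) ⊗ x₂`. -/
def rot13 : X ⊗[ℂ] (X ⊗[ℂ] X) →ₗ[ℂ] (X ⊗[ℂ] X) ⊗[ℂ] X :=
  (TensorProduct.assoc ℂ X X X).symm.toLinearMap
    ∘ₗ LinearMap.lTensor X (TensorProduct.comm ℂ X X).toLinearMap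

/-- Collapsing scalar factors `(c₁ ⊗ c₂) ⊗ m ↦ (c₁ * c₂) • m`. -/
def collapse : (ℂ ⊗[ℂ] ℂ) ⊗[ℂ] X →ₗ[ℂ] X :=
  (TensorProduct.lid ℂ X).toLinearMap
    ∘ₗ LinearMap.rTensor X (TensorProduct.lid ℂ ℂ).toLinearMap

end Rot

section Double

variable {A B : Type*}
  [NormedRing A] [StarRing A] [CStarRing A] [NormedAlgebra ℂ A] [StarModule ℂ A]
  [FiniteDimensional ℂ A]
  [NormedRing B] [StarRing B] [CStarRing B] [NormedAlgebra ℂ B] [StarModule ℂ B]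
  [FiniteDimensional ℂ B]

variable (hA : FiniteHopfCStar A) (hB : FiniteHopfCStar B) (p : A →ₗ[ℂ] B →ₗ[ℂ] ℂ)

/-- Contraction `((b₃ ⊗ b₁) ⊗ b₂) ⊗ ((a₁ ⊗ a₃) ⊗ a₂) ↦ ⟨a₁, S_B b₃⟩ ⟨a₃, b₁⟩ (a₂ ⊗ b₂)`. -/
def mulAux : ((B ⊗[ℂ] B) ⊗[ℂ] B) ⊗[ℂ] ((A ⊗[ℂ] A) ⊗[ℂ] A) →ₗ[ℂ] A ⊗[ℂ] B :=
  collapse (A ⊗[ℂ] B)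
    ∘ₗ TensorProduct.map
        (TensorProduct.map (TensorProduct.lift (p.flip ∘ₗ hB.antipode))
          (TensorProduct.lift p.flip))
        (TensorProduct.comm ℂ B A).toLinearMap
    ∘ₗ LinearMap.rTensor (B ⊗[ℂ] A)
        (TensorProduct.tensorTensorTensorComm ℂ B B A A).toLinearMap
    ∘ₗ (TensorProduct.tensorTensorTensorComm ℂ (B ⊗[ℂ] B) B (A ⊗[ℂ] A) A).toLinearMap

/-- The middle part of the quantum double multiplication:
`b ⊗ a' ↦ Σ ⟨a'₍₁₎, S_B⁻¹ b₍₃₎⟩ ⟨a'₍₃₎, b₍₁₎⟩ (a'₍₂₎ ⊗ b₍₂₎)` (recall `S_B⁻¹ = S_B`). -/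
def mdMid : B ⊗[ℂ] A →ₗ[ℂ] A ⊗[ℂ] B :=
  mulAux hB p ∘ₗ
    TensorProduct.map (rot31 B ∘ₗ comul3 hB) (rot13 A ∘ₗ comul3 hA)

/-- The multiplication of the quantum double `D(A,B)`:
`(a ⊗ b) (a' ⊗ b') = Σ ⟨a'₍₁₎, S_B⁻¹ b₍₃₎⟩ ⟨a'₍₃₎, b₍₁₎⟩ (a a'₍₂₎ ⊗ b₍₂₎ b')`. -/
def mD : (A ⊗[ℂ] B) ⊗[ℂ] (A ⊗[ℂ] B) →ₗ[ℂ] A ⊗[ℂ] B :=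
  (LinearMap.mul' ℂ (A ⊗[ℂ] B) ∘ₗ
      LinearMap.rTensor (A ⊗[ℂ] B)
        (Algebra.TensorProduct.includeLeft : A →ₐ[ℂ] A ⊗[ℂ] B).toLinearMap)
    ∘ₗ LinearMap.lTensor A
        ((LinearMap.mul' ℂ (A ⊗[ℂ] B) ∘ₗ
            LinearMap.lTensor (A ⊗[ℂ] B)
              (Algebra.TensorProduct.includeRight : B →ₐ[ℂ] A ⊗[ℂ] B).toLinearMap)
          ∘ₗ LinearMap.rTensor B (mdMid hA hB p))
    ∘ₗ LinearMap.lTensor A (TensorProduct.assoc ℂ B A B).symm.toLinearMap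
    ∘ₗ (TensorProduct.assoc ℂ A B (A ⊗[ℂ] B)).toLinearMap

/-- The comultiplication of the quantum double. -/
def ΔD : A ⊗[ℂ] B →ₗ[ℂ] (A ⊗[ℂ] B) ⊗[ℂ] (A ⊗[ℂ] B) :=
  (TensorProduct.tensorTensorTensorComm ℂ A A B B).toLinearMap
    ∘ₗ TensorProduct.map hA.comul hB.comul

/-- The tensor product of two linear functionals, as a functional on the tensor product. -/
def funcT (φA : A →ₗ[ℂ] ℂ) (φB : B →ₗ[ℂ] ℂ) : A ⊗[ℂ] B →ₗ[ℂ] ℂ :=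
  (TensorProduct.lid ℂ ℂ).toLinearMap ∘ₗ TensorProduct.map φA φB

/-- The counit of the quantum double. -/
def εD : A ⊗[ℂ] B →ₗ[ℂ] ℂ := funcT hA.counit hB.counit

/-- The antipode of the quantum double:
`S_D (a ⊗ b) = Σ ⟨a₍₁₎, S_B b₍₃₎⟩ ⟨a₍₃₎, b₍₁₎⟩ (S_A a₍₂₎ ⊗ S_B b₍₂₎)`. -/
def SD : A ⊗[ℂ] B →ₗ[ℂ] A ⊗[ℂ] B :=
  TensorProduct.map hA.antipode hB.antipode ∘ₗ mdMid hA hB p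
    ∘ₗ (TensorProduct.comm ℂ A B).toLinearMap

/-- Contraction `(u₁ ⊗ (u₂ ⊗ u₃)) ⊗ (v₁ ⊗ (v₂ ⊗ v₃)) ↦ ⟨u₃, v₁⟩ ⟨u₁, v₃⟩ (u₂ ⊗ v₂)`. -/
def starContract : (A ⊗[ℂ] (A ⊗[ℂ] A)) ⊗[ℂ] (B ⊗[ℂ] (B ⊗[ℂ] B)) →ₗ[ℂ] A ⊗[ℂ] B :=
  collapse (A ⊗[ℂ] B)
    ∘ₗ LinearMap.rTensor (A ⊗[ℂ] B)
        (TensorProduct.map (TensorProduct.lift p) (TensorProduct.lift p))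
    ∘ₗ LinearMap.rTensor (A ⊗[ℂ] B)
        (TensorProduct.tensorTensorTensorComm ℂ A A B B).toLinearMap
    ∘ₗ (TensorProduct.tensorTensorTensorComm ℂ (A ⊗[ℂ] A) A (B ⊗[ℂ] B) B).toLinearMap
    ∘ₗ TensorProduct.map (rot31 A) (rot13 B)

/-- The involution of the quantum double:
`(a ⊗ b)* = Σ ⟨a₍₃₎*, b₍₁₎*⟩ ⟨a₍₁₎*, (S_B b₍₃₎)*⟩ (a₍₂₎* ⊗ b₍₂₎*)`,
extended conjugate-linearly. -/
def starD (x : A ⊗[ℂ] B) : A ⊗[ℂ] B :=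
  starContract p
    (star ((TensorProduct.map (comul3 hA)
        (LinearMap.lTensor B (LinearMap.lTensor B hB.antipode) ∘ₗ comul3 hB)) x))

/-- The composite of `starD` with the componentwise star, a linear map. -/
def starDbar : A ⊗[ℂ] B →ₗ[ℂ] A ⊗[ℂ] B where
  toFun x := star (starD hA hB p x)
  map_add' x y := by
    simp only [starD]
    rw [map_add, @star_add _ _ TensorProduct.instStarAddMonoid, map_add,
      @star_add _ _ TensorProduct.instStarAddMonoid]
  map_smul' c x := by
    simp only [starD, map_smul, star_smul, RingHom.id_apply, starRingEnd_apply, star_star]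

end Double

end QD

namespace QD

section StarTensorMathlib

variable {M N : Type*} [AddCommMonoid M] [AddCommMonoid N] [Module ℂ M] [Module ℂ N]
  [StarAddMonoid M] [StarAddMonoid N] [StarModule ℂ M] [StarModule ℂ N]

instance mathlibStarAddMonoidTensor : StarAddMonoid (M ⊗[ℂ] N) :=
  TensorProduct.instStarAddMonoid

instance mathlibStarModuleTensor : StarModule ℂ (M ⊗[ℂ] N) :=
  TensorProduct.instStarModule

end StarTensorMathlib

end QD

namespace QD

section Book

variable (X Y Z : Type*) [AddCommGroup X] [AddCommGroup Y] [AddCommGroup Z]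
  [Module ℂ X] [Module ℂ Y] [Module ℂ Z]

/-- Heterogeneous `x₁ ⊗ (y ⊗ z) ↦ (z ⊗ x₁) ⊗ y`. -/
def rot31h : X ⊗[ℂ] (Y ⊗[ℂ] Z) →ₗ[ℂ] (Z ⊗[ℂ] X) ⊗[ℂ] Y :=
  (TensorProduct.comm ℂ Y (Z ⊗[ℂ] X)).toLinearMap
    ∘ₗ (TensorProduct.assoc ℂ Y Z X).toLinearMap
    ∘ₗ (TensorProduct.comm ℂ X (Y ⊗[ℂ] Z)).toLinearMap

/-- Heterogeneous `x ⊗ (y ⊗ z) ↦ (x ⊗ z) ⊗ y`. -/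
def rot13h : X ⊗[ℂ] (Y ⊗[ℂ] Z) →ₗ[ℂ] (X ⊗[ℂ] Z) ⊗[ℂ] Y :=
  (TensorProduct.assoc ℂ X Z Y).symm.toLinearMap
    ∘ₗ LinearMap.lTensor X (TensorProduct.comm ℂ Y Z).toLinearMap

variable {X Y Z}

@[simp] lemma rot31h_tmul (x : X) (y : Y) (z : Z) :
    rot31h X Y Z (x ⊗ₜ[ℂ] (y ⊗ₜ[ℂ] z)) = (z ⊗ₜ[ℂ] x) ⊗ₜ[ℂ] y := rfl

@[simp] lemma rot13h_tmul (x : X) (y : Y) (z : Z) :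
    rot13h X Y Z (x ⊗ₜ[ℂ] (y ⊗ₜ[ℂ] z)) = (x ⊗ₜ[ℂ] z) ⊗ₜ[ℂ] y := rfl

end Book

section Ctr

variable {M N P Q R₂ : Type*} [AddCommGroup M] [AddCommGroup N] [AddCommGroup P]
  [AddCommGroup Q] [AddCommGroup R₂] [Module ℂ M] [Module ℂ N] [Module ℂ P]
  [Module ℂ Q] [Module ℂ R₂]

/-- Scalar contraction `(u₃ ⊗ u₁) ⊗ (v₁ ⊗ v₃) ↦ e u₃ v₁ * e u₁ v₃`. -/
def scalC (e : M →ₗ[ℂ] N →ₗ[ℂ] ℂ) : (M ⊗[ℂ] M) ⊗[ℂ] (N ⊗[ℂ] N) →ₗ[ℂ] ℂ :=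
  (TensorProduct.lid ℂ ℂ).toLinearMap
    ∘ₗ TensorProduct.map (TensorProduct.lift e) (TensorProduct.lift e)
    ∘ₗ (TensorProduct.tensorTensorTensorComm ℂ M M N N).toLinearMap

@[simp] lemma scalC_tmul (e : M →ₗ[ℂ] N →ₗ[ℂ] ℂ) (u₃ u₁ : M) (v₁ v₃ : N) :
    scalC e ((u₃ ⊗ₜ[ℂ] u₁) ⊗ₜ[ℂ] (v₁ ⊗ₜ[ℂ] v₃)) = e u₃ v₁ * e u₁ v₃ := by
  simp [scalC, smul_eq_mul]

/-- The master contraction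
`(u₁ ⊗ (x ⊗ u₃)) ⊗ (v₁ ⊗ (y ⊗ v₃)) ↦ (e u₃ v₁ * e u₁ v₃) • F (x ⊗ y)`. -/
def ctr (e : M →ₗ[ℂ] N →ₗ[ℂ] ℂ) (F : P ⊗[ℂ] Q →ₗ[ℂ] R₂) :
    (M ⊗[ℂ] (P ⊗[ℂ] M)) ⊗[ℂ] (N ⊗[ℂ] (Q ⊗[ℂ] N)) →ₗ[ℂ] R₂ :=
  (TensorProduct.lid ℂ R₂).toLinearMap
    ∘ₗ TensorProduct.map (scalC e) F
    ∘ₗ (TensorProduct.tensorTensorTensorComm ℂ (M ⊗[ℂ] M) P (N ⊗[ℂ] N) Q).toLinearMap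
    ∘ₗ TensorProduct.map (rot31h M P M) (rot13h N Q N)

@[simp] lemma ctr_tmul (e : M →ₗ[ℂ] N →ₗ[ℂ] ℂ) (F : P ⊗[ℂ] Q →ₗ[ℂ] R₂)
    (u₁ u₃ : M) (x : P) (v₁ v₃ : N) (y : Q) :
    ctr e F ((u₁ ⊗ₜ[ℂ] (x ⊗ₜ[ℂ] u₃)) ⊗ₜ[ℂ] (v₁ ⊗ₜ[ℂ] (y ⊗ₜ[ℂ] v₃)))
      = (e u₃ v₁ * e u₁ v₃) • F (x ⊗ₜ[ℂ] y) := by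
  simp [ctr]

end Ctr

end QD

set_option linter.unusedSectionVars false

namespace QD

section Iota

variable (X : Type*) [AddCommGroup X] [Module ℂ X]

/-- Regrouping `(x₁ ⊗ x₂) ⊗ (x₃ ⊗ (x₄ ⊗ x₅)) ↦ x₁ ⊗ ((x₂ ⊗ (x₃ ⊗ x₄)) ⊗ x₅)`. -/
def iota : (X ⊗[ℂ] X) ⊗[ℂ] (X ⊗[ℂ] (X ⊗[ℂ] X)) →ₗ[ℂ]
    X ⊗[ℂ] ((X ⊗[ℂ] (X ⊗[ℂ] X)) ⊗[ℂ] X) :=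
  LinearMap.lTensor X
      ((TensorProduct.assoc ℂ X (X ⊗[ℂ] X) X).symm.toLinearMap
        ∘ₗ LinearMap.lTensor X (TensorProduct.assoc ℂ X X X).symm.toLinearMap)
    ∘ₗ (TensorProduct.assoc ℂ X X (X ⊗[ℂ] (X ⊗[ℂ] X))).toLinearMap

variable {X}

@[simp] lemma iota_tmul (x₁ x₂ x₃ x₄ x₅ : X) :
    iota X ((x₁ ⊗ₜ[ℂ] x₂) ⊗ₜ[ℂ] (x₃ ⊗ₜ[ℂ] (x₄ ⊗ₜ[ℂ] x₅)))
      = x₁ ⊗ₜ[ℂ] ((x₂ ⊗ₜ[ℂ] (x₃ ⊗ₜ[ℂ] x₄)) ⊗ₜ[ℂ] x₅) := rfl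

variable (X)

/-- Counit-type collapse `x₁ ⊗ (x₂ ⊗ x₃) ↦ (ε x₁ * ε x₃) • x₂`. -/
def collE (ε : X →ₗ[ℂ] ℂ) : X ⊗[ℂ] (X ⊗[ℂ] X) →ₗ[ℂ] X :=
  (TensorProduct.lid ℂ X).toLinearMap
    ∘ₗ LinearMap.rTensor X ε
    ∘ₗ LinearMap.lTensor X
        ((TensorProduct.rid ℂ X).toLinearMap ∘ₗ LinearMap.lTensor X ε)

variable {X}

@[simp] lemma collE_tmul (ε : X →ₗ[ℂ] ℂ) (x₁ x₂ x₃ : X) :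
    collE X ε (x₁ ⊗ₜ[ℂ] (x₂ ⊗ₜ[ℂ] x₃)) = (ε x₁ * ε x₃) • x₂ := by
  simp only [collE, LinearMap.coe_comp, Function.comp_apply, LinearEquiv.coe_coe,
    LinearMap.lTensor_tmul, LinearMap.rTensor_tmul, TensorProduct.rid_tmul,
    TensorProduct.lid_tmul, TensorProduct.smul_tmul', smul_smul, mul_comm]

end Iota

section CtrLemmas

variable {A B : Type*}
  [NormedRing A] [StarRing A] [CStarRing A] [NormedAlgebra ℂ A] [StarModule ℂ A]
  [FiniteDimensional ℂ A]
  [NormedRing B] [StarRing B] [CStarRing B] [NormedAlgebra ℂ B] [StarModule ℂ B]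
  [FiniteDimensional ℂ B]

variable (p : A →ₗ[ℂ] B →ₗ[ℂ] ℂ)

@[simp] lemma starContract_tmul (u₁ u₂ u₃ : A) (v₁ v₂ v₃ : B) :
    starContract p ((u₁ ⊗ₜ[ℂ] (u₂ ⊗ₜ[ℂ] u₃)) ⊗ₜ[ℂ] (v₁ ⊗ₜ[ℂ] (v₂ ⊗ₜ[ℂ] v₃)))
      = (p u₃ v₁ * p u₁ v₃) • (u₂ ⊗ₜ[ℂ] v₂) := by
  simp only [starContract, collapse, rot31, rot13, comul3, LinearMap.coe_comp,
    Function.comp_apply, LinearEquiv.coe_coe, TensorProduct.map_tmul,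
    TensorProduct.assoc_tmul, TensorProduct.assoc_symm_tmul, TensorProduct.comm_tmul,
    TensorProduct.lid_tmul, TensorProduct.rid_tmul, LinearMap.rTensor_tmul,
    LinearMap.lTensor_tmul, TensorProduct.tensorTensorTensorComm_tmul,
    TensorProduct.lift.tmul, Module.End.mul_apply, LinearMap.flip_apply,
    TensorProduct.smul_tmul', smul_eq_mul]

lemma starContract_eq_ctr : starContract p = ctr p LinearMap.id := by
  ext u₁ u₂ u₃ v₁ v₂ v₃
  simp

end CtrLemmas

end QD

namespace QD

section CtrAlg

variable {M N P Q M' N' P' Q' R₂ R₃ : Type*}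
  [AddCommGroup M] [AddCommGroup N] [AddCommGroup P] [AddCommGroup Q]
  [AddCommGroup M'] [AddCommGroup N'] [AddCommGroup P'] [AddCommGroup Q']
  [AddCommGroup R₂] [AddCommGroup R₃]
  [Module ℂ M] [Module ℂ N] [Module ℂ P] [Module ℂ Q]
  [Module ℂ M'] [Module ℂ N'] [Module ℂ P'] [Module ℂ Q']
  [Module ℂ R₂] [Module ℂ R₃]

lemma ctr_postcomp (e : M →ₗ[ℂ] N →ₗ[ℂ] ℂ) (F : P ⊗[ℂ] Q →ₗ[ℂ] R₂) (G : R₂ →ₗ[ℂ] R₃) :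
    G ∘ₗ ctr e F = ctr e (G ∘ₗ F) := by
  ext u₁ x u₃ v₁ y v₃
  simp

lemma ctr_map (e : M →ₗ[ℂ] N →ₗ[ℂ] ℂ) (f : P →ₗ[ℂ] P') (g : Q →ₗ[ℂ] Q')
    (F : P' ⊗[ℂ] Q' →ₗ[ℂ] R₂) :
    ctr e (F ∘ₗ TensorProduct.map f g)
      = ctr e F ∘ₗ TensorProduct.map (LinearMap.lTensor M (LinearMap.rTensor M f))
          (LinearMap.lTensor N (LinearMap.rTensor N g)) := by
  ext u₁ x u₃ v₁ y v₃
  simp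

lemma ctr_ctr_iota (e : M →ₗ[ℂ] N →ₗ[ℂ] ℂ) :
    ctr e (ctr e (LinearMap.id : M ⊗[ℂ] N →ₗ[ℂ] M ⊗[ℂ] N)) ∘ₗ
        TensorProduct.map (iota M) (iota N)
      = ctr ((pairT e).compl₂ (TensorProduct.comm ℂ N N).toLinearMap)
          (LinearMap.id : M ⊗[ℂ] N →ₗ[ℂ] M ⊗[ℂ] N) := by
  ext x₁ x₂ x₃ x₄ x₅ y₁ y₂ y₃ y₄ y₅
  simp [pairT, smul_smul]
  ring_nf

lemma ctr_block (e' : (M ⊗[ℂ] M) →ₗ[ℂ] (N ⊗[ℂ] N) →ₗ[ℂ] ℂ)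
    (f : M →ₗ[ℂ] M ⊗[ℂ] M) (g : N →ₗ[ℂ] N ⊗[ℂ] N) :
    ctr e' (LinearMap.id : M ⊗[ℂ] N →ₗ[ℂ] M ⊗[ℂ] N) ∘ₗ
        TensorProduct.map (TensorProduct.map f (LinearMap.lTensor M f))
          (TensorProduct.map g (LinearMap.lTensor N g))
      = ctr ((e'.comp f).compl₂ g) (LinearMap.id : M ⊗[ℂ] N →ₗ[ℂ] M ⊗[ℂ] N) := by
  ext a₁ a₂ a₃ b₁ b₂ b₃
  simp

lemma ctr_factor (e : M →ₗ[ℂ] N →ₗ[ℂ] ℂ) (εM : M →ₗ[ℂ] ℂ) (εN : N →ₗ[ℂ] ℂ)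
    (he : ∀ a b, e a b = εM a * εN b) :
    ctr e (LinearMap.id : M ⊗[ℂ] N →ₗ[ℂ] M ⊗[ℂ] N)
      = TensorProduct.map (collE M εM) (collE N εN) := by
  ext a₁ a₂ a₃ b₁ b₂ b₃
  simp [he, TensorProduct.smul_tmul', TensorProduct.tmul_smul, smul_smul]
  ring_nf

lemma assoc_nat (f : M →ₗ[ℂ] M') (g : N →ₗ[ℂ] N') (h : P →ₗ[ℂ] P') :
    (TensorProduct.assoc ℂ M' N' P').toLinearMap ∘ₗ
        TensorProduct.map (TensorProduct.map f g) h
      = TensorProduct.map f (TensorProduct.map g h) ∘ₗ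
          (TensorProduct.assoc ℂ M N P).toLinearMap := by
  ext x y z
  simp

end CtrAlg

end QD

namespace QD

section StarComm

variable {M N M' N' : Type*}
  [AddCommGroup M] [AddCommGroup N] [AddCommGroup M'] [AddCommGroup N']
  [Module ℂ M] [Module ℂ N] [Module ℂ M'] [Module ℂ N']
  [StarAddMonoid M] [StarAddMonoid N] [StarAddMonoid M'] [StarAddMonoid N']
  [StarModule ℂ M] [StarModule ℂ N] [StarModule ℂ M'] [StarModule ℂ N']

lemma map_star_comm (f : M →ₗ[ℂ] M') (g : N →ₗ[ℂ] N')
    (hf : ∀ m, f (star m) = star (f m)) (hg : ∀ n, g (star n) = star (g n))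
    (z : M ⊗[ℂ] N) :
    TensorProduct.map f g (star z) = star (TensorProduct.map f g z) := by
  induction z using TensorProduct.induction_on with
  | zero => simp
  | tmul m n => simp [hf, hg]
  | add x y hx hy => rw [star_add, map_add, map_add, star_add, hx, hy]

end StarComm

section ConjMap

variable {M N : Type*} [AddCommMonoid M] [AddCommMonoid N] [Module ℂ M] [Module ℂ N]
  [StarAddMonoid M] [StarAddMonoid N] [StarModule ℂ M] [StarModule ℂ N]

/-- The conjugate `x ↦ star (f (star x))` of a linear map, as a linear map. -/
def conjMap (f : M →ₗ[ℂ] N) : M →ₗ[ℂ] N where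
  toFun x := star (f (star x))
  map_add' x y := by rw [star_add, map_add, star_add]
  map_smul' c x := by
    simp only [star_smul, map_smul, star_star, RingHom.id_apply]

@[simp] lemma conjMap_apply (f : M →ₗ[ℂ] N) (x : M) :
    conjMap f x = star (f (star x)) := rfl

end ConjMap

section HopfX

set_option linter.unusedSectionVars false

variable {X : Type*} [NormedRing X] [StarRing X] [CStarRing X] [NormedAlgebra ℂ X]
  [StarModule ℂ X] [FiniteDimensional ℂ X] (h : FiniteHopfCStar X)

lemma antipode_star (x : X) : h.antipode (star x) = star (h.antipode x) := by
  have h1 : star (h.antipode (star x)) = h.antipode x := by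
    have h2 := h.star_antipode_star_antipode (h.antipode x)
    rwa [h.antipode_antipode] at h2
  rw [← h1, star_star]

lemma comul_star' (x : X) : h.comul (star x) = star (h.comul x) := h.comul_star x

lemma comul3_star (x : X) : comul3 h (star x) = star (comul3 h x) := by
  show LinearMap.lTensor X h.comul (h.comul (star x)) = _
  rw [h.comul_star]
  exact map_star_comm LinearMap.id h.comul (fun _ => rfl) h.comul_star (h.comul x)

lemma star_mul'_comm (z : X ⊗[ℂ] X) :
    star (LinearMap.mul' ℂ X z)
      = LinearMap.mul' ℂ X ((TensorProduct.comm ℂ X X) (star z)) := by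
  induction z using TensorProduct.induction_on with
  | zero => simp
  | tmul x y => simp [star_mul]
  | add x y hx hy => rw [star_add, map_add, map_add, map_add, star_add, hx, hy]

/-- The "opposite" antipode identity `Σ x₍₂₎ · S x₍₁₎ = ε x • 1`, obtained from the
antipode axiom by applying the involution. -/
lemma op_antipode (x : X) :
    LinearMap.mul' ℂ X
        ((TensorProduct.comm ℂ X X) (LinearMap.rTensor X h.antipode (h.comul x)))
      = h.counit x • 1 := by
  have ax := h.mul_antipode_rTensor_comul (star x)
  have hst : star (LinearMap.rTensor X h.antipode (h.comul (star x)))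
      = LinearMap.rTensor X h.antipode (h.comul x) := by
    have hmap := map_star_comm h.antipode (LinearMap.id (R := ℂ) (M := X))
      (antipode_star h) (fun _ => rfl) (h.comul x)
    have h2 : (LinearMap.rTensor X h.antipode) = TensorProduct.map h.antipode LinearMap.id := rfl
    rw [h2, h.comul_star, hmap, star_star]
  have := congrArg star ax
  rw [star_mul'_comm, hst, star_smul, star_one, h.counit_star, star_star] at this
  exact this

lemma antipode_comp_antipode : h.antipode ∘ₗ h.antipode = LinearMap.id :=
  LinearMap.ext h.antipode_antipode

lemma cax : LinearMap.rTensor X h.comul ∘ₗ h.comul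
    = (TensorProduct.assoc ℂ X X X).symm.toLinearMap ∘ₗ comul3 h := by
  refine LinearMap.ext fun a => ?_
  have := h.coassoc a
  simp only [LinearMap.coe_comp, Function.comp_apply, LinearEquiv.coe_coe]
  rw [show (comul3 h) a = LinearMap.lTensor X h.comul (h.comul a) from rfl, ← this,
    LinearEquiv.symm_apply_apply]

lemma collE_comp_comul3 : collE X h.counit ∘ₗ comul3 h = LinearMap.id := by
  refine LinearMap.ext fun a => ?_
  have hinner : ((TensorProduct.rid ℂ X).toLinearMap ∘ₗ LinearMap.lTensor X h.counit)
      ∘ₗ h.comul = LinearMap.id := LinearMap.ext fun x => h.comul_counit x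
  have h0 : collE X h.counit (comul3 h a)
      = (TensorProduct.lid ℂ X) (LinearMap.rTensor X h.counit
          ((LinearMap.lTensor X ((TensorProduct.rid ℂ X).toLinearMap ∘ₗ
              LinearMap.lTensor X h.counit))
            (LinearMap.lTensor X h.comul (h.comul a)))) := rfl
  show collE X h.counit (comul3 h a) = a
  rw [h0, ← LinearMap.lTensor_comp_apply, hinner, LinearMap.lTensor_id,
    LinearMap.id_apply]
  exact h.counit_comul a

end HopfX

end QD

namespace QD

section Coassoc

set_option linter.unusedSectionVars false

variable {X : Type*} [NormedRing X] [StarRing X] [CStarRing X] [NormedAlgebra ℂ X]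
  [StarModule ℂ X] [FiniteDimensional ℂ X] (h : FiniteHopfCStar X)

lemma ca2_apply (a : X) :
    (TensorProduct.assoc ℂ X X (X ⊗[ℂ] (X ⊗[ℂ] X)))
        (TensorProduct.map h.comul (LinearMap.lTensor X h.comul) (comul3 h a))
      = LinearMap.lTensor X (LinearMap.lTensor X (comul3 h) ∘ₗ h.comul) (h.comul a) := by
  have m1 : TensorProduct.map h.comul (LinearMap.lTensor X h.comul) ∘ₗ
        LinearMap.lTensor X h.comul = TensorProduct.map h.comul (comul3 h) := by
    ext x y; rfl
  have m2 : TensorProduct.map h.comul (comul3 h)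
      = LinearMap.lTensor (X ⊗[ℂ] X) (comul3 h) ∘ₗ LinearMap.rTensor X h.comul := by
    ext x y; rfl
  have m3 : (TensorProduct.assoc ℂ X X (X ⊗[ℂ] (X ⊗[ℂ] X))).toLinearMap ∘ₗ
        (LinearMap.lTensor (X ⊗[ℂ] X) (comul3 h) ∘ₗ
          (TensorProduct.assoc ℂ X X X).symm.toLinearMap)
      = LinearMap.lTensor X (LinearMap.lTensor X (comul3 h)) := by
    ext x y z; rfl
  have e0 : comul3 h a = LinearMap.lTensor X h.comul (h.comul a) := rfl
  have s1 := LinearMap.congr_fun m1 (h.comul a)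
  have s2 := LinearMap.congr_fun m2 (h.comul a)
  have s3 := LinearMap.congr_fun (cax h) a
  have s4 := LinearMap.congr_fun m3 (comul3 h a)
  simp only [LinearMap.coe_comp, Function.comp_apply, LinearEquiv.coe_coe] at s1 s2 s3 s4
  rw [e0, s1, s2, s3, s4, e0, ← LinearMap.lTensor_comp_apply]

lemma ca_apply (a : X) :
    LinearMap.lTensor X (LinearMap.rTensor X (comul3 h)) (comul3 h a)
      = iota X (TensorProduct.map h.comul (LinearMap.lTensor X h.comul) (comul3 h a)) := by
  have n2 : LinearMap.rTensor X (LinearMap.lTensor X h.comul) ∘ₗ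
        (TensorProduct.assoc ℂ X X X).symm.toLinearMap
      = (TensorProduct.assoc ℂ X (X ⊗[ℂ] X) X).symm.toLinearMap ∘ₗ
          LinearMap.lTensor X (LinearMap.rTensor X h.comul) := by
    ext x y z; rfl
  have finner : LinearMap.rTensor X (comul3 h) ∘ₗ h.comul
      = ((TensorProduct.assoc ℂ X (X ⊗[ℂ] X) X).symm.toLinearMap ∘ₗ
          LinearMap.lTensor X (TensorProduct.assoc ℂ X X X).symm.toLinearMap) ∘ₗ
        (LinearMap.lTensor X (comul3 h) ∘ₗ h.comul) := by
    refine LinearMap.ext fun x => ?_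
    simp only [LinearMap.coe_comp, Function.comp_apply, LinearEquiv.coe_coe]
    have t1 : LinearMap.rTensor X (comul3 h) (h.comul x)
        = LinearMap.rTensor X (LinearMap.lTensor X h.comul)
            (LinearMap.rTensor X h.comul (h.comul x)) := by
      rw [show comul3 h = LinearMap.lTensor X h.comul ∘ₗ h.comul from rfl,
        LinearMap.rTensor_comp]; rfl
    have s3 := LinearMap.congr_fun (cax h) x
    simp only [LinearMap.coe_comp, Function.comp_apply, LinearEquiv.coe_coe] at s3
    have s5 := LinearMap.congr_fun n2 (comul3 h x)
    simp only [LinearMap.coe_comp, Function.comp_apply, LinearEquiv.coe_coe] at s5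
    rw [t1, s3, s5, show comul3 h x = LinearMap.lTensor X h.comul (h.comul x) from rfl,
      ← LinearMap.lTensor_comp_apply, cax h]
    simp only [LinearMap.coe_comp, LinearMap.lTensor_comp, Function.comp_apply,
      LinearEquiv.coe_coe, LinearMap.lTensor_comp_apply]
  have l1 : LinearMap.lTensor X (LinearMap.rTensor X (comul3 h)) (comul3 h a)
      = LinearMap.lTensor X (LinearMap.rTensor X (comul3 h) ∘ₗ h.comul) (h.comul a) := by
    rw [show comul3 h a = LinearMap.lTensor X h.comul (h.comul a) from rfl,
      ← LinearMap.lTensor_comp_apply]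
  rw [l1, finner, LinearMap.lTensor_comp, LinearMap.coe_comp, Function.comp_apply,
    ← ca2_apply]
  rfl

end Coassoc

end QD

namespace QD

section CoassocB

set_option linter.unusedSectionVars false

variable {X : Type*} [NormedRing X] [StarRing X] [CStarRing X] [NormedAlgebra ℂ X]
  [StarModule ℂ X] [FiniteDimensional ℂ X] (h : FiniteHopfCStar X)

lemma cb_apply (b : X) :
    LinearMap.lTensor X (LinearMap.rTensor X
        (LinearMap.lTensor X (LinearMap.lTensor X h.antipode) ∘ₗ comul3 h))
        (LinearMap.rTensor (X ⊗[ℂ] X) h.antipode (comul3 h b))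
      = iota X (TensorProduct.map (LinearMap.rTensor X h.antipode ∘ₗ h.comul)
          (LinearMap.lTensor X (LinearMap.rTensor X h.antipode ∘ₗ h.comul))
          (comul3 h b)) := by
  have d1 : LinearMap.lTensor X (LinearMap.rTensor X (comul3 h)) ∘ₗ
        LinearMap.rTensor (X ⊗[ℂ] X) h.antipode
      = LinearMap.rTensor ((X ⊗[ℂ] (X ⊗[ℂ] X)) ⊗[ℂ] X) h.antipode ∘ₗ
          LinearMap.lTensor X (LinearMap.rTensor X (comul3 h)) := by
    ext x y z; simp
  have d2 : LinearMap.lTensor X (LinearMap.rTensor X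
        (LinearMap.lTensor X (LinearMap.lTensor X h.antipode))) ∘ₗ
        (LinearMap.rTensor ((X ⊗[ℂ] (X ⊗[ℂ] X)) ⊗[ℂ] X) h.antipode ∘ₗ iota X)
      = iota X ∘ₗ TensorProduct.map (LinearMap.rTensor X h.antipode)
          (LinearMap.lTensor X (LinearMap.rTensor X h.antipode)) := by
    ext x₁ x₂ x₃ x₄ x₅; simp
  have d3 : TensorProduct.map (LinearMap.rTensor X h.antipode)
        (LinearMap.lTensor X (LinearMap.rTensor X h.antipode)) ∘ₗ
        TensorProduct.map h.comul (LinearMap.lTensor X h.comul)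
      = TensorProduct.map (LinearMap.rTensor X h.antipode ∘ₗ h.comul)
          (LinearMap.lTensor X (LinearMap.rTensor X h.antipode ∘ₗ h.comul)) := by
    ext x y; simp
  have e1 : LinearMap.lTensor X (LinearMap.rTensor X
        (LinearMap.lTensor X (LinearMap.lTensor X h.antipode) ∘ₗ comul3 h))
      = LinearMap.lTensor X (LinearMap.rTensor X
          (LinearMap.lTensor X (LinearMap.lTensor X h.antipode))) ∘ₗ
        LinearMap.lTensor X (LinearMap.rTensor X (comul3 h)) := by
    rw [← LinearMap.lTensor_comp, ← LinearMap.rTensor_comp]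
  rw [e1]
  have s1 := LinearMap.congr_fun d1 (comul3 h b)
  simp only [LinearMap.coe_comp, Function.comp_apply] at s1
  have s2 := LinearMap.congr_fun d2
    (TensorProduct.map h.comul (LinearMap.lTensor X h.comul) (comul3 h b))
  simp only [LinearMap.coe_comp, Function.comp_apply] at s2
  have s3 := LinearMap.congr_fun d3 (comul3 h b)
  simp only [LinearMap.coe_comp, Function.comp_apply] at s3
  rw [LinearMap.coe_comp, Function.comp_apply, s1, ca_apply, s2, s3]

end CoassocB

end QD

namespace QD

section MainProof

set_option linter.unusedSectionVars false

variable {A B : Type*}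
  [NormedRing A] [StarRing A] [CStarRing A] [NormedAlgebra ℂ A] [StarModule ℂ A]
  [FiniteDimensional ℂ A]
  [NormedRing B] [StarRing B] [CStarRing B] [NormedAlgebra ℂ B] [StarModule ℂ B]
  [FiniteDimensional ℂ B]

variable (hA : FiniteHopfCStar A) (hB : FiniteHopfCStar B) (p : A →ₗ[ℂ] B →ₗ[ℂ] ℂ)

lemma pair_conj (hp : IsHopfPairing hA hB p) (a : A) (b : B) :
    starRingEnd ℂ (p (star a) (star b)) = p a (hB.antipode b) := by
  rw [hp.pair_star a (star b), antipode_star hB, star_star, Complex.conj_conj]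

lemma pairT_mul (hp : IsHopfPairing hA hB p) (a : A) (z : B ⊗[ℂ] B) :
    pairT p (hA.comul a) z = p a (LinearMap.mul' ℂ B z) := by
  induction z using TensorProduct.induction_on with
  | zero => simp
  | tmul b₁ b₂ => rw [hp.pair_comul a b₁ b₂, LinearMap.mul'_apply]
  | add x y hx hy => rw [map_add, map_add, map_add, hx, hy]

lemma star_starContract (hp : IsHopfPairing hA hB p)
    (w : (A ⊗[ℂ] (A ⊗[ℂ] A)) ⊗[ℂ] (B ⊗[ℂ] (B ⊗[ℂ] B))) :
    star (starContract p w) = starContract (p.compl₂ hB.antipode) (star w) := by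
  have key : conjMap (starContract p) = starContract (p.compl₂ hB.antipode) := by
    ext u₁ u₂ u₃ v₁ v₂ v₃
    simp only [LinearMap.coe_comp, Function.comp_apply, TensorProduct.AlgebraTensorModule.curry_apply,
      TensorProduct.curry_apply, LinearMap.coe_restrictScalars, conjMap_apply, star_tmul,
      starContract_tmul, star_smul, star_star, LinearMap.compl₂_apply]
    congr 1
    rw [← starRingEnd_apply, map_mul, pair_conj hA hB p hp, pair_conj hA hB p hp]
  have := LinearMap.congr_fun key (star w)
  rw [conjMap_apply, star_star] at this
  rw [← this]

lemma mm_star (x : A ⊗[ℂ] B) :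
    TensorProduct.map (comul3 hA)
        (LinearMap.lTensor B (LinearMap.lTensor B hB.antipode) ∘ₗ comul3 hB) (star x)
      = star (TensorProduct.map (comul3 hA)
          (LinearMap.lTensor B (LinearMap.lTensor B hB.antipode) ∘ₗ comul3 hB) x) := by
  refine map_star_comm _ _ (comul3_star hA) (fun b => ?_) x
  show LinearMap.lTensor B (LinearMap.lTensor B hB.antipode) (comul3 hB (star b)) = _
  rw [comul3_star hB]
  exact map_star_comm LinearMap.id (LinearMap.lTensor B hB.antipode) (fun _ => rfl)
    (fun z => map_star_comm LinearMap.id hB.antipode (fun _ => rfl) (antipode_star hB) z)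
    (comul3 hB b)

lemma sc_q_eq : starContract (p.compl₂ hB.antipode)
    = starContract p ∘ₗ LinearMap.lTensor (A ⊗[ℂ] (A ⊗[ℂ] A))
        (TensorProduct.map hB.antipode (LinearMap.lTensor B hB.antipode)) := by
  ext u₁ u₂ u₃ v₁ v₂ v₃
  simp

lemma s_fold : TensorProduct.map hB.antipode (LinearMap.lTensor B hB.antipode) ∘ₗ
      LinearMap.lTensor B (LinearMap.lTensor B hB.antipode)
    = LinearMap.rTensor (B ⊗[ℂ] B) hB.antipode := by
  ext b y z
  simp [hB.antipode_antipode]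

end MainProof

end QD

namespace QD

section FinalChain

set_option linter.unusedSectionVars false

variable {A B : Type*}
  [NormedRing A] [StarRing A] [CStarRing A] [NormedAlgebra ℂ A] [StarModule ℂ A]
  [FiniteDimensional ℂ A]
  [NormedRing B] [StarRing B] [CStarRing B] [NormedAlgebra ℂ B] [StarModule ℂ B]
  [FiniteDimensional ℂ B]

variable (hA : FiniteHopfCStar A) (hB : FiniteHopfCStar B) (p : A →ₗ[ℂ] B →ₗ[ℂ] ℂ)

lemma g_val (hp : IsHopfPairing hA hB p) (a : A) (b : B) :
    ((((pairT p).compl₂ (TensorProduct.comm ℂ B B).toLinearMap).comp hA.comul).compl₂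
        (LinearMap.rTensor B hB.antipode ∘ₗ hB.comul)) a b
      = hA.counit a * hB.counit b := by
  simp only [LinearMap.compl₂_apply, LinearMap.comp_apply, LinearEquiv.coe_coe]
  rw [pairT_mul hA hB p hp, op_antipode hB b, map_smul, hp.pair_one_right,
    smul_eq_mul, mul_comm]

lemma main_chain (hp : IsHopfPairing hA hB p) (a : A) (b : B) :
    starContract p
        (TensorProduct.map (comul3 hA)
            (LinearMap.lTensor B (LinearMap.lTensor B hB.antipode) ∘ₗ comul3 hB)
          (starContract p
            ((comul3 hA a) ⊗ₜ[ℂ]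
              (LinearMap.rTensor (B ⊗[ℂ] B) hB.antipode (comul3 hB b)))))
      = a ⊗ₜ[ℂ] b := by
  set u₀ := comul3 hA a with hu₀
  set v₀ := LinearMap.rTensor (B ⊗[ℂ] B) hB.antipode (comul3 hB b) with hv₀
  set NB := LinearMap.lTensor B (LinearMap.lTensor B hB.antipode) ∘ₗ comul3 hB with hNB
  set DSB := LinearMap.rTensor B hB.antipode ∘ₗ hB.comul with hDSB
  set e₂ := (pairT p).compl₂ (TensorProduct.comm ℂ B B).toLinearMap with he₂
  have step12 : starContract p (TensorProduct.map (comul3 hA) NB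
        (starContract p (u₀ ⊗ₜ[ℂ] v₀)))
      = ctr p (ctr p LinearMap.id)
          ((LinearMap.lTensor A (LinearMap.rTensor A (comul3 hA)) u₀) ⊗ₜ[ℂ]
            (LinearMap.lTensor B (LinearMap.rTensor B NB) v₀)) := by
    rw [starContract_eq_ctr p]
    have A1 := LinearMap.congr_fun
      (ctr_postcomp p LinearMap.id (ctr p (LinearMap.id) ∘ₗ
        TensorProduct.map (comul3 hA) NB)) (u₀ ⊗ₜ[ℂ] v₀)
    simp only [LinearMap.coe_comp, Function.comp_apply, LinearMap.comp_id,
      LinearMap.id_coe, id_eq] at A1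
    have A2 := LinearMap.congr_fun (ctr_map p (comul3 hA) NB (ctr p LinearMap.id))
      (u₀ ⊗ₜ[ℂ] v₀)
    simp only [LinearMap.coe_comp, Function.comp_apply, TensorProduct.map_tmul] at A2
    rw [A1, A2]
  rw [step12, hu₀, hv₀, ca_apply hA a, cb_apply hB b]
  have A3 := LinearMap.congr_fun (ctr_ctr_iota p)
    ((TensorProduct.map hA.comul (LinearMap.lTensor A hA.comul) (comul3 hA a)) ⊗ₜ[ℂ]
      (TensorProduct.map DSB (LinearMap.lTensor B DSB) (comul3 hB b)))
  simp only [LinearMap.coe_comp, Function.comp_apply, TensorProduct.map_tmul] at A3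
  rw [A3]
  have A4 := LinearMap.congr_fun (ctr_block e₂ hA.comul DSB)
    ((comul3 hA a) ⊗ₜ[ℂ] (comul3 hB b))
  simp only [LinearMap.coe_comp, Function.comp_apply, TensorProduct.map_tmul] at A4
  rw [A4, ctr_factor _ hA.counit hB.counit (g_val hA hB p hp),
    TensorProduct.map_tmul]
  have C1 := LinearMap.congr_fun (collE_comp_comul3 hA) a
  have C2 := LinearMap.congr_fun (collE_comp_comul3 hB) b
  simp only [LinearMap.coe_comp, Function.comp_apply, LinearMap.id_coe, id_eq] at C1 C2
  rw [C1, C2]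

end FinalChain

end QD

namespace QD

variable {A B : Type*}
  [NormedRing A] [StarRing A] [CStarRing A] [NormedAlgebra ℂ A] [StarModule ℂ A]
  [FiniteDimensional ℂ A]
  [NormedRing B] [StarRing B] [CStarRing B] [NormedAlgebra ℂ B] [StarModule ℂ B]
  [FiniteDimensional ℂ B]

/-- Lemma 3.3: the involution of `D(A,B)` is involutive: `((a,b)*)* = (a,b)`. -/
theorem stmt_11 (hA : FiniteHopfCStar A) (hB : FiniteHopfCStar B)
    (p : A →ₗ[ℂ] B →ₗ[ℂ] ℂ) (hp : IsHopfPairing hA hB p) (hnd : Nondegenerate p) :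
    ∀ (a : A) (b : B), starD hA hB p (starD hA hB p (a ⊗ₜ[ℂ] b)) = a ⊗ₜ[ℂ] b := by
  intro a b
  have hstarD : ∀ x : A ⊗[ℂ] B, starD hA hB p x
      = starContract p (star ((TensorProduct.map (comul3 hA)
          (LinearMap.lTensor B (LinearMap.lTensor B hB.antipode) ∘ₗ comul3 hB)) x)) :=
    fun _ => rfl
  have inner_star : star (starD hA hB p (a ⊗ₜ[ℂ] b))
      = starContract (p.compl₂ hB.antipode)
          ((TensorProduct.map (comul3 hA)
            (LinearMap.lTensor B (LinearMap.lTensor B hB.antipode) ∘ₗ comul3 hB))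
            (a ⊗ₜ[ℂ] b)) := by
    rw [hstarD, star_starContract hA hB p hp, star_star]
  have conv : starContract (p.compl₂ hB.antipode)
        ((TensorProduct.map (comul3 hA)
          (LinearMap.lTensor B (LinearMap.lTensor B hB.antipode) ∘ₗ comul3 hB))
          (a ⊗ₜ[ℂ] b))
      = starContract p ((comul3 hA a) ⊗ₜ[ℂ]
          (LinearMap.rTensor (B ⊗[ℂ] B) hB.antipode (comul3 hB b))) := by
    have e1 : (TensorProduct.map (comul3 hA)
          (LinearMap.lTensor B (LinearMap.lTensor B hB.antipode) ∘ₗ comul3 hB))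
          (a ⊗ₜ[ℂ] b)
        = (comul3 hA a) ⊗ₜ[ℂ]
            (LinearMap.lTensor B (LinearMap.lTensor B hB.antipode) (comul3 hB b)) :=
      rfl
    have s1 := LinearMap.congr_fun (sc_q_eq hB p)
      ((comul3 hA a) ⊗ₜ[ℂ]
        (LinearMap.lTensor B (LinearMap.lTensor B hB.antipode) (comul3 hB b)))
    simp only [LinearMap.coe_comp, Function.comp_apply, LinearMap.lTensor_tmul] at s1
    have s2 := LinearMap.congr_fun (s_fold hB) (comul3 hB b)
    simp only [LinearMap.coe_comp, Function.comp_apply] at s2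
    rw [e1, s1, s2]
  rw [hstarD, ← mm_star hA hB, inner_star, conv]
  exact main_chain hA hB p hp a b

end QD
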